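/- Let β > 0, γ ≥ 0 with β + γ < 1. For ξ ∈ ℝ³ and ρ > 0, define I²_{β,γ}(ξ,ρ) := ∫_{S²} (|ξ|²+ρ²)^{2γ} / ( |ξ−ρω|^{2β+2γ} |ξ+ρω|^{2β+2γ} ) dω, the integral being with respect to the surface measure on the unit sphere S² ⊂ ℝ³. Then there exist constants 0 < c_{β,γ} ≤ C_{β,γ} < ∞ such that for all ξ ∈ ℝ³ and ρ > 0: c_{β,γ}·(|ξ|²+ρ²)^{−2β} ≤ I²_{β,γ}(ξ,ρ) ≤ C_{β,γ}·(|ξ|²+ρ²)^{−2β}. -/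

import Mathlib

open MeasureTheory Complex ENNReal RealInnerProductSpace

noncomputable section

abbrev E3 : Type := EuclideanSpace ℝ (Fin 3)

/-- Space-time Fourier transform on `ℝ × ℝ³ × ℝ³`. -/
def FT3 (F : ℝ × E3 × E3 → ℂ) (p : ℝ × E3 × E3) : ℂ :=
  ∫ q : ℝ × E3 × E3,
    Complex.exp (-Complex.I * Complex.ofReal
      (q.1 * p.1 + ⟪q.2.1, p.2.1⟫ + ⟪q.2.2, p.2.2⟫)) * F q

/-- Inverse space-time Fourier transform on `ℝ × ℝ³ × ℝ³`. -/
def IFT3 (F : ℝ × E3 × E3 → ℂ) (p : ℝ × E3 × E3) : ℂ :=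
  Complex.ofReal (((2 * Real.pi) ^ 7)⁻¹) *
  ∫ q : ℝ × E3 × E3,
    Complex.exp (Complex.I * Complex.ofReal
      (q.1 * p.1 + ⟪q.2.1, p.2.1⟫ + ⟪q.2.2, p.2.2⟫)) * F q

/-- Fourier multiplier with (real) symbol `m` on space-time functions. -/
def mult3 (m : ℝ × E3 × E3 → ℝ) (F : ℝ × E3 × E3 → ℂ) : ℝ × E3 × E3 → ℂ :=
  IFT3 fun p => Complex.ofReal (m p) * FT3 F p

/-- Fourier transform on `ℝ × ℝ³`. -/
def FT2 (f : ℝ × E3 → ℂ) (p : ℝ × E3) : ℂ :=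
  ∫ q : ℝ × E3,
    Complex.exp (-Complex.I * Complex.ofReal (q.1 * p.1 + ⟪q.2, p.2⟫)) * f q

def IFT2 (f : ℝ × E3 → ℂ) (p : ℝ × E3) : ℂ :=
  Complex.ofReal (((2 * Real.pi) ^ 4)⁻¹) *
  ∫ q : ℝ × E3,
    Complex.exp (Complex.I * Complex.ofReal (q.1 * p.1 + ⟪q.2, p.2⟫)) * f q

def mult2 (m : ℝ × E3 → ℝ) (f : ℝ × E3 → ℂ) : ℝ × E3 → ℂ :=
  IFT2 fun p => Complex.ofReal (m p) * FT2 f p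

/-- Fourier transform on `ℝ³`. -/
def FTx (f : E3 → ℂ) (ξ : E3) : ℂ :=
  ∫ x : E3, Complex.exp (-Complex.I * Complex.ofReal ⟪x, ξ⟫) * f x

def IFTx (f : E3 → ℂ) (ξ : E3) : ℂ :=
  Complex.ofReal (((2 * Real.pi) ^ 3)⁻¹) *
  ∫ x : E3, Complex.exp (Complex.I * Complex.ofReal ⟪x, ξ⟫) * f x

def multx (m : E3 → ℝ) (f : E3 → ℂ) : E3 → ℂ :=
  IFTx fun ξ => Complex.ofReal (m ξ) * FTx f ξ

/-- Fourier transform on `ℝ³ × ℝ³`. -/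
def FTxy (g : E3 × E3 → ℂ) (q : E3 × E3) : ℂ :=
  ∫ r : E3 × E3,
    Complex.exp (-Complex.I * Complex.ofReal (⟪r.1, q.1⟫ + ⟪r.2, q.2⟫)) * g r

def IFTxy (g : E3 × E3 → ℂ) (q : E3 × E3) : ℂ :=
  Complex.ofReal (((2 * Real.pi) ^ 6)⁻¹) *
  ∫ r : E3 × E3,
    Complex.exp (Complex.I * Complex.ofReal (⟪r.1, q.1⟫ + ⟪r.2, q.2⟫)) * g r

def multxy (m : E3 × E3 → ℝ) (g : E3 × E3 → ℂ) : E3 × E3 → ℂ :=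
  IFTxy fun q => Complex.ofReal (m q) * FTxy g q

/-- `⟨∇_x⟩^a ⟨∇_y⟩^b` on space-time functions. -/
def opJxy (a b : ℝ) : (ℝ × E3 × E3 → ℂ) → ℝ × E3 × E3 → ℂ :=
  mult3 fun p => (1 + ‖p.2.1‖ ^ 2) ^ (a / 2) * (1 + ‖p.2.2‖ ^ 2) ^ (b / 2)

/-- `⟨∇_x⟩^a` on functions of `(t,x)`. -/
def opJx2 (a : ℝ) : (ℝ × E3 → ℂ) → ℝ × E3 → ℂ :=
  mult2 fun p => (1 + ‖p.2‖ ^ 2) ^ (a / 2)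

/-- `|∂_t|^s` on functions of `(t,x)`. -/
def opDt2 (s : ℝ) : (ℝ × E3 → ℂ) → ℝ × E3 → ℂ :=
  mult2 fun p => |p.1| ^ s

/-- `|∇_x|^s` on functions of `(t,x)`. -/
def opDx2 (s : ℝ) : (ℝ × E3 → ℂ) → ℝ × E3 → ℂ :=
  mult2 fun p => ‖p.2‖ ^ s

/-- `⟨∇_x⟩^a |∇_x|^s` on functions of `(t,x)`. -/
def opJDx2 (a s : ℝ) : (ℝ × E3 → ℂ) → ℝ × E3 → ℂ :=
  mult2 fun p => (1 + ‖p.2‖ ^ 2) ^ (a / 2) * ‖p.2‖ ^ s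

/-- `⟨∇_x⟩^a ⟨∇_y⟩^b` on functions of `(x,y)`. -/
def opJxy0 (a b : ℝ) : (E3 × E3 → ℂ) → E3 × E3 → ℂ :=
  multxy fun q => (1 + ‖q.1‖ ^ 2) ^ (a / 2) * (1 + ‖q.2‖ ^ 2) ^ (b / 2)

/-- `|∇_x|^s |∇_y|^{s'}` on functions of `(x,y)`. -/
def opDxy0 (s s' : ℝ) : (E3 × E3 → ℂ) → E3 × E3 → ℂ :=
  multxy fun q => ‖q.1‖ ^ s * ‖q.2‖ ^ s'

/-- `⟨∇⟩^a` on functions of `x`. -/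
def opJx0 (a : ℝ) : (E3 → ℂ) → E3 → ℂ :=
  multx fun ξ => (1 + ‖ξ‖ ^ 2) ^ (a / 2)

/-- `‖F‖_{X^δ}` with weight `⟨τ + |ξ|² + |η|²⟩^δ`. -/
def Xnorm (δ : ℝ) (F : ℝ × E3 × E3 → ℂ) : ℝ≥0∞ :=
  (∫⁻ p : ℝ × E3 × E3,
      ENNReal.ofReal ((1 + (p.1 + ‖p.2.1‖ ^ 2 + ‖p.2.2‖ ^ 2) ^ 2) ^ δ) *
        (‖FT3 F p‖₊ : ℝ≥0∞) ^ 2) ^ (1 / 2 : ℝ)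

/-- `‖F‖_{X_±^δ}` with weight `⟨τ + |ξ|² − |η|²⟩^δ`. -/
def XnormPM (δ : ℝ) (F : ℝ × E3 × E3 → ℂ) : ℝ≥0∞ :=
  (∫⁻ p : ℝ × E3 × E3,
      ENNReal.ofReal ((1 + (p.1 + ‖p.2.1‖ ^ 2 - ‖p.2.2‖ ^ 2) ^ 2) ^ δ) *
        (‖FT3 F p‖₊ : ℝ≥0∞) ^ 2) ^ (1 / 2 : ℝ)

/-- One space variable `X^δ` norm, weight `⟨τ + |ξ|²⟩^δ`. -/
def Xnorm2 (δ : ℝ) (f : ℝ × E3 → ℂ) : ℝ≥0∞ :=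
  (∫⁻ p : ℝ × E3,
      ENNReal.ofReal ((1 + (p.1 + ‖p.2‖ ^ 2) ^ 2) ^ δ) *
        (‖FT2 f p‖₊ : ℝ≥0∞) ^ 2) ^ (1 / 2 : ℝ)

/-- `‖F‖_{L^p(dt)L^q(dx)L²(dy)}`. -/
def mixedNorm (p q : ℝ≥0∞) (F : ℝ × E3 × E3 → ℂ) : ℝ≥0∞ :=
  eLpNorm (fun t : ℝ =>
    (eLpNorm (fun x : E3 =>
      (eLpNorm (fun y : E3 => F (t, x, y)) 2 volume).toReal) q volume).toReal) p volume

/-- `‖F‖_{L^p(dt)L^q(dy)L²(dx)}` (the roles of `x` and `y` interchanged). -/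
def mixedNormSwap (p q : ℝ≥0∞) (F : ℝ × E3 × E3 → ℂ) : ℝ≥0∞ :=
  eLpNorm (fun t : ℝ =>
    (eLpNorm (fun y : E3 =>
      (eLpNorm (fun x : E3 => F (t, x, y)) 2 volume).toReal) q volume).toReal) p volume

/-- `‖f‖_{L^p(dt)L^q(dx)}`. -/
def mixed2Norm (p q : ℝ≥0∞) (f : ℝ × E3 → ℂ) : ℝ≥0∞ :=
  eLpNorm (fun t : ℝ => (eLpNorm (fun x : E3 => f (t, x)) q volume).toReal) p volume

/-- Characteristic function of `[0,T]`. -/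
def cchar (T t : ℝ) : ℝ := if t ∈ Set.Icc 0 T then 1 else 0

/-- Multiplication by the characteristic function of `[0,T]` in time. -/
def cT (T : ℝ) (F : ℝ × E3 × E3 → ℂ) : ℝ × E3 × E3 → ℂ :=
  fun p => Complex.ofReal (cchar T p.1) * F p

def cT2 (T : ℝ) (f : ℝ × E3 → ℂ) : ℝ × E3 → ℂ :=
  fun p => Complex.ofReal (cchar T p.1) * f p

/-- Restriction `(t,x) ↦ F(t,x,x+w)`. -/
def collapsePlus (w : E3) (F : ℝ × E3 × E3 → ℂ) : ℝ × E3 → ℂ :=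
  fun p => F (p.1, p.2, p.2 + w)

/-- Restriction `(t,x) ↦ F(t,x+w,x−w)`. -/
def collapsePM (w : E3) (F : ℝ × E3 × E3 → ℂ) : ℝ × E3 → ℂ :=
  fun p => F (p.1, p.2 + w, p.2 - w)

/-- Restriction `(t,x) ↦ F(t,x+z,x)`. -/
def collapseShift (z : E3) (F : ℝ × E3 × E3 → ℂ) : ℝ × E3 → ℂ :=
  fun p => F (p.1, p.2 + z, p.2)

/-- The norm `N_T(Λ)`. -/
def NTnorm (α T : ℝ) (Λ : ℝ × E3 × E3 → ℂ) : ℝ≥0∞ :=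
  mixedNorm 2 6 (opJxy α α (cT T Λ)) + mixedNorm ⊤ 2 (opJxy α α (cT T Λ)) +
  mixedNormSwap 2 6 (opJxy α α (cT T Λ)) + mixedNormSwap ⊤ 2 (opJxy α α (cT T Λ)) +
  (⨆ w : E3, eLpNorm (opJx2 α (collapsePlus w (cT T Λ))) 2 volume) +
  (⨆ w : E3, eLpNorm (opDt2 (1 / 4) (collapsePlus w (cT T Λ))) 2 volume)

/-- The norm `Ṅ_T(Γ)`. -/
def NTdotNorm (α T : ℝ) (Γ : ℝ × E3 × E3 → ℂ) : ℝ≥0∞ :=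
  mixedNorm 2 6 (opJxy α α (cT T Γ)) + mixedNormSwap 2 6 (opJxy α α (cT T Γ)) +
  mixedNorm ⊤ 2 (opJxy α α (cT T Γ)) +
  (⨆ w : E3, eLpNorm (opJDx2 (α - 1 / 2) (1 / 2) (collapsePlus w (cT T Γ))) 2 volume)

/-- The norm `N_T(φ)`. -/
def NTphiNorm (α T : ℝ) (φ : ℝ × E3 → ℂ) : ℝ≥0∞ :=
  mixed2Norm 2 6 (opJx2 α (cT2 T φ)) + mixed2Norm ⊤ 2 (opJx2 α (cT2 T φ))

/-- Laplacian of a function on `ℝ³`, as the sum of second derivatives along coordinates. -/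
def lapE (f : E3 → ℂ) (x : E3) : ℂ :=
  ∑ i : Fin 3, iteratedDeriv 2 (fun s : ℝ => f (x + s • EuclideanSpace.single i (1 : ℝ))) 0

/-- Rescaled potential `v_N(x) = N^{3β} v(N^β x)`. -/
def vNf (v : E3 → ℂ) (β : ℝ) (N : ℕ) (x : E3) : ℂ :=
  Complex.ofReal ((N : ℝ) ^ (3 * β)) * v (((N : ℝ) ^ β) • x)

/-- The `φ` equation of the HFB system. -/
def HFBphi (v : E3 → ℂ) (β : ℝ) (N : ℕ)
    (φ : ℝ × E3 → ℂ) (Λ Γ : ℝ × E3 × E3 → ℂ) : Prop :=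
  ∀ (t : ℝ) (x₁ : E3),
    (1 / Complex.I) * deriv (fun s => φ (s, x₁)) t - lapE (fun x => φ (t, x)) x₁
    = -(∫ y : E3, vNf v β N (x₁ - y) * Γ (t, y, y)) * φ (t, x₁)
      - ∫ y : E3, vNf v β N (x₁ - y) *
          (φ (t, y) * (Γ (t, y, x₁) - (starRingEnd ℂ) (φ (t, y)) * φ (t, x₁))
            + (starRingEnd ℂ) (φ (t, y)) * (Λ (t, x₁, y) - φ (t, x₁) * φ (t, y)))

/-- The `Λ` equation of the HFB system. -/
def HFBLambda (v : E3 → ℂ) (β : ℝ) (N : ℕ)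
    (φ : ℝ × E3 → ℂ) (Λ Γ : ℝ × E3 × E3 → ℂ) : Prop :=
  ∀ (t : ℝ) (x₁ x₂ : E3),
    (1 / Complex.I) * deriv (fun s => Λ (s, x₁, x₂)) t
      - lapE (fun x => Λ (t, x, x₂)) x₁ - lapE (fun y => Λ (t, x₁, y)) x₂
      + ((N : ℂ))⁻¹ * vNf v β N (x₁ - x₂) * Λ (t, x₁, x₂)
    = -(∫ y : E3, (vNf v β N (x₁ - y) + vNf v β N (x₂ - y)) * Γ (t, y, y)) * Λ (t, x₁, x₂)
      - (∫ y : E3, (vNf v β N (x₁ - y) + vNf v β N (x₂ - y)) *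
          (Λ (t, x₁, y) * Γ (t, y, x₂) + (starRingEnd ℂ) (Γ (t, x₁, y)) * Λ (t, y, x₂)))
      + 2 * (∫ y : E3, (vNf v β N (x₁ - y) + vNf v β N (x₂ - y)) *
          Complex.ofReal (‖φ (t, y)‖ ^ 2)) * φ (t, x₁) * φ (t, x₂)

/-- The `Γ̄` equation of the HFB system. -/
def HFBGamma (v : E3 → ℂ) (β : ℝ) (N : ℕ)
    (φ : ℝ × E3 → ℂ) (Λ Γ : ℝ × E3 × E3 → ℂ) : Prop :=
  ∀ (t : ℝ) (x₁ x₂ : E3),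
    (1 / Complex.I) * deriv (fun s => (starRingEnd ℂ) (Γ (s, x₁, x₂))) t
      - lapE (fun x => (starRingEnd ℂ) (Γ (t, x, x₂))) x₁
      + lapE (fun y => (starRingEnd ℂ) (Γ (t, x₁, y))) x₂
    = -(∫ y : E3, (vNf v β N (x₁ - y) - vNf v β N (x₂ - y)) *
          (Λ (t, x₁, y) * (starRingEnd ℂ) (Λ (t, y, x₂))
            + (starRingEnd ℂ) (Γ (t, x₁, y)) * (starRingEnd ℂ) (Γ (t, y, x₂))
            + (starRingEnd ℂ) (Γ (t, y, y)) * (starRingEnd ℂ) (Γ (t, x₁, x₂))))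
      + 2 * (∫ y : E3, (vNf v β N (x₁ - y) - vNf v β N (x₂ - y)) *
          Complex.ofReal (‖φ (t, y)‖ ^ 2)) * φ (t, x₁) * (starRingEnd ℂ) (φ (t, x₂))

/-- Solutions of the full HFB system. -/
def IsHFB (v : E3 → ℂ) (β : ℝ) (N : ℕ)
    (φ : ℝ × E3 → ℂ) (Λ Γ : ℝ × E3 × E3 → ℂ) : Prop :=
  HFBphi v β N φ Λ Γ ∧ HFBLambda v β N φ Λ Γ ∧ HFBGamma v β N φ Λ Γ

/-- Free propagator `e^{itΔ}` on `ℝ³ × ℝ³`, the Fourier multiplier `e^{−it(|ξ|²+|η|²)}`. -/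
def freeProp (t : ℝ) (g : E3 × E3 → ℂ) : E3 × E3 → ℂ :=
  IFTxy fun q =>
    Complex.exp (-Complex.I * Complex.ofReal (t * (‖q.1‖ ^ 2 + ‖q.2‖ ^ 2))) * FTxy g q

/-- `∫ c(t−s) e^{−i(t−s)Δ} G(s) ds`. -/
def duhamelNeg (T : ℝ) (G : ℝ × E3 × E3 → ℂ) : ℝ × E3 × E3 → ℂ := fun p =>
  ∫ s : ℝ, Complex.ofReal (cchar T (p.1 - s)) *
    freeProp (-(p.1 - s)) (fun q => G (s, q.1, q.2)) (p.2.1, p.2.2)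

/-- `∫ c(t−s) e^{i(t−s)Δ} G(s) ds`. -/
def duhamelPos (T : ℝ) (G : ℝ × E3 × E3 → ℂ) : ℝ × E3 × E3 → ℂ := fun p =>
  ∫ s : ℝ, Complex.ofReal (cchar T (p.1 - s)) *
    freeProp (p.1 - s) (fun q => G (s, q.1, q.2)) (p.2.1, p.2.2)

/-- The one-dimensional Fourier transform of the characteristic function of `[0,T]`. -/
def chatC (T u : ℝ) : ℂ :=
  ∫ t : ℝ, Complex.ofReal (cchar T t) * Complex.exp (-Complex.I * Complex.ofReal (t * u))

/-- `P_{|ξ−η| ≲ N^{β'}}`: the Fourier multiplier `φ₀(|ξ−η|/2^I)`. -/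
def PloMinus (φ₀ : ℝ → ℝ) (I : ℤ) : (ℝ × E3 × E3 → ℂ) → ℝ × E3 × E3 → ℂ :=
  mult3 fun p => φ₀ (‖p.2.1 - p.2.2‖ / 2 ^ I)

/-- `P_{|ξ+η| ≲ N^{β'}}`. -/
def PloPlus (φ₀ : ℝ → ℝ) (I : ℤ) : (ℝ × E3 × E3 → ℂ) → ℝ × E3 × E3 → ℂ :=
  mult3 fun p => φ₀ (‖p.2.1 + p.2.2‖ / 2 ^ I)

/-- `P_{|ξ−η| ≳ N^{β'}} = Id − P_{|ξ−η| ≲ N^{β'}}`. -/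
def PhiMinus (φ₀ : ℝ → ℝ) (I : ℤ) (F : ℝ × E3 × E3 → ℂ) : ℝ × E3 × E3 → ℂ :=
  fun p => F p - PloMinus φ₀ I F p

/-- `P_{|ξ+η| ≳ N^{β'}} = Id − P_{|ξ+η| ≲ N^{β'}}`. -/
def PhiPlus (φ₀ : ℝ → ℝ) (I : ℤ) (F : ℝ × E3 × E3 → ℂ) : ℝ × E3 × E3 → ℂ :=
  fun p => F p - PloPlus φ₀ I F p

/-- Sharp cutoff `P_{|ξ−η|<M}`. -/
def PsharpMinus (M : ℝ) : (ℝ × E3 × E3 → ℂ) → ℝ × E3 × E3 → ℂ :=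
  mult3 fun p => if ‖p.2.1 - p.2.2‖ < M then 1 else 0

/-- The spherical integral `I²_{β,γ}(ξ,ρ)`, with respect to the standard surface
measure (two-dimensional Hausdorff measure) on the unit sphere `S² ⊂ ℝ³`. -/
def Isq (β γ : ℝ) (ξ : E3) (ρ : ℝ) : ℝ :=
  ∫ ω in Metric.sphere (0 : E3) 1,
    (‖ξ‖ ^ 2 + ρ ^ 2) ^ (2 * γ) /
      (‖ξ - ρ • ω‖ ^ (2 * β + 2 * γ) * ‖ξ + ρ • ω‖ ^ (2 * β + 2 * γ)) ∂μH[2]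

set_option maxHeartbeats 1000000

open Metric Set NNReal

local notation "μS" => (μH[2] : Measure E3)

def np : E3 := EuclideanSpace.single 2 1

def Gm : ℝ × ℝ → E3 := fun u =>
  (WithLp.equiv 2 (Fin 3 → ℝ)).symm ![u.1, u.2, Real.sqrt (1 - u.1^2 - u.2^2)]

def Dm : Set (ℝ × ℝ) := {u | u.1^2 + u.2^2 ≤ 3/4}

lemma coord_dist (x y : E3) (i : Fin 3) : |x i - y i| ≤ dist x y := by
  rw [EuclideanSpace.dist_eq]
  rw [← Real.sqrt_sq_eq_abs]
  apply Real.sqrt_le_sqrt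
  have h : dist (x i) (y i) ^ 2 = (x i - y i)^2 := by rw [Real.dist_eq, _root_.sq_abs]
  rw [← h]
  exact Finset.single_le_sum (f := fun i => dist (x i) (y i) ^ 2)
    (fun j _ => sq_nonneg _) (Finset.mem_univ i)

lemma norm_sq_coords (x : E3) : x 0 ^ 2 + x 1 ^ 2 + x 2 ^ 2 = ‖x‖ ^ 2 := by
  rw [EuclideanSpace.norm_eq, Real.sq_sqrt (by positivity)]
  simp [Fin.sum_univ_three, _root_.sq_abs]

lemma Gm_apply (u : ℝ × ℝ) :
    Gm u 0 = u.1 ∧ Gm u 1 = u.2 ∧ Gm u 2 = Real.sqrt (1 - u.1^2 - u.2^2) := by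
  refine ⟨?_, ?_, ?_⟩ <;> simp [Gm]

lemma Gm_lipschitz : LipschitzOnWith 5 Gm Dm := by
  rw [lipschitzOnWith_iff_dist_le_mul]
  intro u hu w hw
  have hu0 : u.1^2 + u.2^2 ≤ 3/4 := hu.out
  have hw0 : w.1^2 + w.2^2 ≤ 3/4 := hw.out
  set d := dist u w with hd
  have hdnn : 0 ≤ d := dist_nonneg
  have hd1 : |u.1 - w.1| ≤ d := by
    rw [hd, Prod.dist_eq, ← Real.dist_eq]; exact le_max_left _ _
  have hd2 : |u.2 - w.2| ≤ d := by
    rw [hd, Prod.dist_eq, ← Real.dist_eq]; exact le_max_right _ _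
  have hA4 : (1:ℝ)/4 ≤ 1 - u.1^2 - u.2^2 := by nlinarith
  have hB4 : (1:ℝ)/4 ≤ 1 - w.1^2 - w.2^2 := by nlinarith
  have hAnn : (0:ℝ) ≤ 1 - u.1^2 - u.2^2 := by linarith
  have hBnn : (0:ℝ) ≤ 1 - w.1^2 - w.2^2 := by linarith
  have hhalf : Real.sqrt ((1:ℝ)/4) = 1/2 := by
    rw [show (1:ℝ)/4 = (1/2)^2 by norm_num, Real.sqrt_sq]; norm_num
  have hsA : (1:ℝ)/2 ≤ Real.sqrt (1 - u.1^2 - u.2^2) := by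
    rw [← hhalf]; exact Real.sqrt_le_sqrt hA4
  have hsB : (1:ℝ)/2 ≤ Real.sqrt (1 - w.1^2 - w.2^2) := by
    rw [← hhalf]; exact Real.sqrt_le_sqrt hB4
  have hprod : (Real.sqrt (1 - u.1^2 - u.2^2) - Real.sqrt (1 - w.1^2 - w.2^2)) *
      (Real.sqrt (1 - u.1^2 - u.2^2) + Real.sqrt (1 - w.1^2 - w.2^2))
      = (1 - u.1^2 - u.2^2) - (1 - w.1^2 - w.2^2) := by
    have h1 := Real.sq_sqrt hAnn
    have h2 := Real.sq_sqrt hBnn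
    nlinarith
  have hABd : |(1 - u.1^2 - u.2^2) - (1 - w.1^2 - w.2^2)| ≤ 4 * d := by
    have e : (1 - u.1^2 - u.2^2) - (1 - w.1^2 - w.2^2)
        = (w.1 - u.1) * (w.1 + u.1) + (w.2 - u.2) * (w.2 + u.2) := by ring
    rw [e]
    have c1 : -1 ≤ u.1 := by nlinarith [sq_nonneg (u.1+1), sq_nonneg u.2]
    have c2 : u.1 ≤ 1 := by nlinarith [sq_nonneg (u.1-1), sq_nonneg u.2]
    have c3 : -1 ≤ u.2 := by nlinarith [sq_nonneg (u.2+1), sq_nonneg u.1]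
    have c4 : u.2 ≤ 1 := by nlinarith [sq_nonneg (u.2-1), sq_nonneg u.1]
    have c5 : -1 ≤ w.1 := by nlinarith [sq_nonneg (w.1+1), sq_nonneg w.2]
    have c6 : w.1 ≤ 1 := by nlinarith [sq_nonneg (w.1-1), sq_nonneg w.2]
    have c7 : -1 ≤ w.2 := by nlinarith [sq_nonneg (w.2+1), sq_nonneg w.1]
    have c8 : w.2 ≤ 1 := by nlinarith [sq_nonneg (w.2-1), sq_nonneg w.1]
    have h1 : |w.1 + u.1| ≤ 2 := by rw [_root_.abs_le]; constructor <;> linarith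
    have h2 : |w.2 + u.2| ≤ 2 := by rw [_root_.abs_le]; constructor <;> linarith
    calc |(w.1 - u.1) * (w.1 + u.1) + (w.2 - u.2) * (w.2 + u.2)|
        ≤ |(w.1 - u.1) * (w.1 + u.1)| + |(w.2 - u.2) * (w.2 + u.2)| := abs_add_le _ _
      _ ≤ d * 2 + d * 2 := by
          rw [_root_.abs_mul, _root_.abs_mul]
          gcongr
          · rw [_root_.abs_sub_comm]; exact hd1
          · rw [_root_.abs_sub_comm]; exact hd2
      _ = 4 * d := by ring
  have hg : |Real.sqrt (1 - u.1^2 - u.2^2) - Real.sqrt (1 - w.1^2 - w.2^2)| ≤ 4 * d := by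
    have h2 : |Real.sqrt (1 - u.1^2 - u.2^2) - Real.sqrt (1 - w.1^2 - w.2^2)| *
        (Real.sqrt (1 - u.1^2 - u.2^2) + Real.sqrt (1 - w.1^2 - w.2^2))
        = |(1 - u.1^2 - u.2^2) - (1 - w.1^2 - w.2^2)| := by
      rw [← _root_.abs_of_nonneg (show (0:ℝ) ≤ Real.sqrt (1 - u.1^2 - u.2^2) + Real.sqrt (1 - w.1^2 - w.2^2) by linarith),
        ← _root_.abs_mul, hprod]
    nlinarith [_root_.abs_nonneg (Real.sqrt (1 - u.1^2 - u.2^2) - Real.sqrt (1 - w.1^2 - w.2^2)), hABd]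
  obtain ⟨e0, e1, e2⟩ := Gm_apply u
  obtain ⟨f0, f1, f2⟩ := Gm_apply w
  have q1 : |u.1 - w.1| ^ 2 ≤ d ^ 2 := pow_le_pow_left₀ (_root_.abs_nonneg _) hd1 2
  have q2 : |u.2 - w.2| ^ 2 ≤ d ^ 2 := pow_le_pow_left₀ (_root_.abs_nonneg _) hd2 2
  have q3 : |Real.sqrt (1 - u.1^2 - u.2^2) - Real.sqrt (1 - w.1^2 - w.2^2)| ^ 2 ≤ (4*d) ^ 2 :=
    pow_le_pow_left₀ (_root_.abs_nonneg _) hg 2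
  have h5 : (5:ℝ)*d = Real.sqrt ((5*d)^2) := (Real.sqrt_sq (by positivity)).symm
  have key : dist (Gm u) (Gm w) ≤ 5 * d := by
    rw [EuclideanSpace.dist_eq, h5]
    apply Real.sqrt_le_sqrt
    rw [Fin.sum_univ_three]
    simp only [Real.dist_eq, e0, e1, e2, f0, f1, f2]
    nlinarith [q1, q2, q3, _root_.sq_abs (u.1-w.1), _root_.sq_abs (u.2-w.2),
      _root_.sq_abs (Real.sqrt (1 - u.1^2 - u.2^2) - Real.sqrt (1 - w.1^2 - w.2^2)), sq_nonneg d]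
  refine key.trans_eq ?_
  norm_num

lemma np_mem : np ∈ Metric.sphere (0:E3) 1 := by
  simp [np, EuclideanSpace.norm_single]

lemma cap_np (t : ℝ) (ht : 0 < t) (ht2 : t ≤ 1/2) :
    μS (Metric.sphere (0:E3) 1 ∩ ball np t) ≤ ENNReal.ofReal (100 * t^2) := by
  have hsub : Metric.sphere (0:E3) 1 ∩ ball np t ⊆ Gm '' (Dm ∩ ball ((0:ℝ),(0:ℝ)) t) := by
    rintro x ⟨hxS, hxb⟩
    have hx1 : ‖x‖ = 1 := by simpa using mem_sphere_zero_iff_norm.mp hxS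
    have hsum : x 0 ^ 2 + x 1 ^ 2 + x 2 ^ 2 = 1 := by rw [norm_sq_coords, hx1]; norm_num
    have hdist : dist x np < t := mem_ball.mp hxb
    have h2 : |x 2 - 1| ≤ 1/2 := by
      have := coord_dist x np 2
      have hnp2 : np 2 = 1 := by simp [np]
      rw [hnp2] at this
      linarith
    have hx2half : (1:ℝ)/2 ≤ x 2 := by
      rcases _root_.abs_le.mp h2 with ⟨h2a, h2b⟩; linarith
    have hx2nn : (0:ℝ) ≤ x 2 := by linarith
    have hDm : (x 0, x 1) ∈ Dm := by
      show x 0 ^ 2 + x 1 ^ 2 ≤ 3/4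
      nlinarith
    have hball : ((x 0, x 1) : ℝ × ℝ) ∈ ball ((0:ℝ),(0:ℝ)) t := by
      rw [mem_ball, Prod.dist_eq]
      have b0 : |x 0 - 0| < t := by
        have := coord_dist x np 0
        have hnp0 : np 0 = 0 := by simp [np]
        rw [hnp0] at this; linarith
      have b1 : |x 1 - 0| < t := by
        have := coord_dist x np 1
        have hnp1 : np 1 = 0 := by simp [np]
        rw [hnp1] at this; linarith
      simp only [Real.dist_eq]
      exact max_lt (by simpa using b0) (by simpa using b1)
    refine ⟨(x 0, x 1), ⟨hDm, hball⟩, ?_⟩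
    obtain ⟨e0, e1, e2⟩ := Gm_apply (x 0, x 1)
    have hx2eq : Real.sqrt (1 - (x 0)^2 - (x 1)^2) = x 2 := by
      rw [show 1 - (x 0)^2 - (x 1)^2 = (x 2)^2 by nlinarith, Real.sqrt_sq hx2nn]
    ext i
    fin_cases i
    · exact e0
    · exact e1
    · exact e2.trans hx2eq
  have hlip : LipschitzOnWith 5 Gm (Dm ∩ ball ((0:ℝ),(0:ℝ)) t) :=
    Gm_lipschitz.mono inter_subset_left
  calc μS (Metric.sphere (0:E3) 1 ∩ ball np t)
      ≤ μS (Gm '' (Dm ∩ ball ((0:ℝ),(0:ℝ)) t)) := measure_mono hsub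
    _ ≤ (5:ℝ≥0) ^ (2:ℝ) * μH[2] (Dm ∩ ball ((0:ℝ),(0:ℝ)) t) :=
        hlip.hausdorffMeasure_image_le (by norm_num)
    _ ≤ (5:ℝ≥0) ^ (2:ℝ) * μH[2] (ball ((0:ℝ),(0:ℝ)) t) :=
        mul_le_mul_right (measure_mono inter_subset_right) _
    _ = (5:ℝ≥0) ^ (2:ℝ) * volume (ball ((0:ℝ),(0:ℝ)) t) := by
        rw [hausdorffMeasure_prod_real]
    _ ≤ ENNReal.ofReal (100 * t^2) := by
        have h25 : ((5:ℝ≥0):ℝ≥0∞) ^ (2:ℝ) = ENNReal.ofReal 25 := by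
          rw [show ((2:ℝ)) = ((2:ℕ):ℝ) by norm_num, ENNReal.rpow_natCast]
          rw [show (ENNReal.ofReal 25) = ((25:ℝ≥0∞)) by norm_num]
          norm_num
        rw [← ball_prod_same, Measure.volume_eq_prod, Measure.prod_prod, Real.volume_ball]
        rw [h25, ← ENNReal.ofReal_mul (by linarith), ← ENNReal.ofReal_mul (by norm_num)]
        exact ENNReal.ofReal_le_ofReal (by nlinarith)

lemma cap_small (p : E3) (r : ℝ) (hr : 0 < r) (hr2 : r ≤ 1/4) :
    μS (Metric.sphere (0:E3) 1 ∩ ball p r) ≤ ENNReal.ofReal (400 * r^2) := by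
  by_cases h : (Metric.sphere (0:E3) 1 ∩ ball p r).Nonempty
  · obtain ⟨x₀, hx₀S, hx₀b⟩ := h
    have hx₀norm : ‖x₀‖ = 1 := by simpa using mem_sphere_zero_iff_norm.mp hx₀S
    have hsub : Metric.sphere (0:E3) 1 ∩ ball p r ⊆ Metric.sphere (0:E3) 1 ∩ ball x₀ (2*r) := by
      rintro x ⟨hxS, hxb⟩
      refine ⟨hxS, mem_ball.mpr ?_⟩
      have h1 : dist x p < r := mem_ball.mp hxb
      have h2 : dist x₀ p < r := mem_ball.mp hx₀b
      calc dist x x₀ ≤ dist x p + dist p x₀ := dist_triangle _ _ _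
        _ < r + r := by rw [dist_comm p x₀]; linarith
        _ = 2*r := by ring
    set L := (Submodule.reflection (ℝ ∙ (x₀ - np))ᗮ : E3 ≃ₗᵢ[ℝ] E3) with hL
    have hLx₀ : L x₀ = np := Submodule.reflection_sub (by rw [hx₀norm]; simp [np, EuclideanSpace.norm_single])
    set e := L.toIsometryEquiv with he
    have him : e '' (Metric.sphere (0:E3) 1 ∩ ball x₀ (2*r))
        = Metric.sphere (0:E3) 1 ∩ ball np (2*r) := by
      rw [Set.image_inter e.injective]
      congr 1
      · ext y
        constructor
        · rintro ⟨z, hz, rfl⟩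
          have : ‖z‖ = 1 := by simpa using mem_sphere_zero_iff_norm.mp hz
          simp only [mem_sphere_zero_iff_norm]
          show ‖L z‖ = 1
          rw [L.norm_map]; exact this
        · intro hy
          refine ⟨e.symm y, ?_, e.apply_symm_apply y⟩
          have : ‖y‖ = 1 := by simpa using mem_sphere_zero_iff_norm.mp hy
          simp only [mem_sphere_zero_iff_norm]
          show ‖L.symm y‖ = 1
          rw [L.symm.norm_map]; exact this
      · rw [IsometryEquiv.image_ball, show e x₀ = np from hLx₀]
    calc μS (Metric.sphere (0:E3) 1 ∩ ball p r)
        ≤ μS (Metric.sphere (0:E3) 1 ∩ ball x₀ (2*r)) := measure_mono hsub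
      _ = μS (e '' (Metric.sphere (0:E3) 1 ∩ ball x₀ (2*r))) :=
          (e.hausdorffMeasure_image 2 _).symm
      _ = μS (Metric.sphere (0:E3) 1 ∩ ball np (2*r)) := by rw [him]
      _ ≤ ENNReal.ofReal (100 * (2*r)^2) := cap_np (2*r) (by linarith) (by linarith)
      _ = ENNReal.ofReal (400 * r^2) := by congr 1; ring
  · rw [not_nonempty_iff_eq_empty] at h
    rw [h]
    simp

lemma sphere_meas_finite : μS (Metric.sphere (0:E3) 1) < ⊤ := by
  obtain ⟨t, ht⟩ := (isCompact_sphere (0:E3) 1).elim_finite_subcover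
    (fun x : E3 => ball x (1/4)) (fun x => isOpen_ball)
    (fun x hx => Set.mem_iUnion.mpr ⟨x, mem_ball_self (by norm_num)⟩)
  have hsub : Metric.sphere (0:E3) 1 ⊆ ⋃ x ∈ t, (Metric.sphere (0:E3) 1 ∩ ball x (1/4)) := by
    intro y hy
    obtain ⟨x, hxt, hyx⟩ := by simpa using ht hy
    exact Set.mem_biUnion hxt ⟨hy, mem_ball.mpr (by rw [show (1:ℝ)/4 = 4⁻¹ by norm_num]; exact hyx)⟩
  calc μS (Metric.sphere (0:E3) 1) ≤ ∑ x ∈ t, μS (Metric.sphere (0:E3) 1 ∩ ball x (1/4)) :=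
        le_trans (measure_mono hsub) (measure_biUnion_finset_le t _)
    _ ≤ ∑ x ∈ t, ENNReal.ofReal (400 * (1/4)^2) :=
        Finset.sum_le_sum (fun x _ => cap_small x (1/4) (by norm_num) le_rfl)
    _ < ⊤ := by
        rw [Finset.sum_const, nsmul_eq_mul]
        exact ENNReal.mul_lt_top (ENNReal.natCast_lt_top _) ENNReal.ofReal_lt_top

lemma sphere_meas_pos : 0 < μS (Metric.sphere (0:E3) 1) := by
  set π : E3 → ℝ × ℝ := fun x => (x 0, x 1) with hπ
  have hlip : LipschitzWith 1 π := by
    rw [lipschitzWith_iff_dist_le_mul]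
    intro x y
    rw [Prod.dist_eq]
    simp only [hπ, one_mul]
    refine max_le ?_ ?_
    · rw [Real.dist_eq]; simpa using coord_dist x y 0
    · rw [Real.dist_eq]; simpa using coord_dist x y 1
  have hsub : ball ((0:ℝ),(0:ℝ)) (1/2) ⊆ π '' (Metric.sphere (0:E3) 1) := by
    intro u hu
    rw [mem_ball, Prod.dist_eq] at hu
    simp only [Real.dist_eq, sub_zero] at hu
    have h1 : |u.1| < 1/2 := lt_of_le_of_lt (le_max_left _ _) hu
    have h2 : |u.2| < 1/2 := lt_of_le_of_lt (le_max_right _ _) hu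
    have hsq : u.1^2 + u.2^2 ≤ 3/4 := by
      have a1 : u.1^2 ≤ (1/2)^2 := by rw [← _root_.sq_abs]; apply pow_le_pow_left₀ (_root_.abs_nonneg _) (le_of_lt h1)
      have a2 : u.2^2 ≤ (1/2)^2 := by rw [← _root_.sq_abs]; apply pow_le_pow_left₀ (_root_.abs_nonneg _) (le_of_lt h2)
      nlinarith
    have hnn : 0 ≤ 1 - u.1^2 - u.2^2 := by nlinarith
    refine ⟨Gm u, ?_, ?_⟩
    · obtain ⟨e0, e1, e2⟩ := Gm_apply u
      rw [mem_sphere_zero_iff_norm]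
      have hs := norm_sq_coords (Gm u)
      rw [e0, e1, e2, Real.sq_sqrt hnn] at hs
      have : ‖Gm u‖^2 = 1 := by rw [← hs]; ring
      nlinarith [norm_nonneg (Gm u)]
    · obtain ⟨e0, e1, e2⟩ := Gm_apply u
      simp only [hπ, e0, e1]
  have h1 : (1:ℝ≥0∞) ≤ μH[2] (π '' (Metric.sphere (0:E3) 1)) := by
    have : μH[2] (ball ((0:ℝ),(0:ℝ)) (1/2)) = 1 := by
      rw [hausdorffMeasure_prod_real, ← ball_prod_same, Measure.volume_eq_prod,
        Measure.prod_prod, Real.volume_ball, ← ENNReal.ofReal_mul (by norm_num)]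
      norm_num
    rw [← this]
    exact measure_mono hsub
  have h2 : μH[2] (π '' (Metric.sphere (0:E3) 1)) ≤ (1:ℝ≥0) ^ (2:ℝ) * μS (Metric.sphere (0:E3) 1) :=
    hlip.hausdorffMeasure_image_le (by norm_num) _
  rw [show ((1:ℝ≥0):ℝ≥0∞) ^ (2:ℝ) = 1 by norm_num, one_mul] at h2
  exact lt_of_lt_of_le (by norm_num) (h1.trans h2)

def C0 : ℝ≥0∞ := ENNReal.ofReal 400 + μS (Metric.sphere (0:E3) 1) * ENNReal.ofReal 16

lemma C0_lt_top : C0 < ⊤ := by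
  rw [C0]
  exact ENNReal.add_lt_top.mpr ⟨ENNReal.ofReal_lt_top,
    ENNReal.mul_lt_top sphere_meas_finite ENNReal.ofReal_lt_top⟩

lemma cap_all (p : E3) (r : ℝ) (hr : 0 < r) :
    μS (Metric.sphere (0:E3) 1 ∩ ball p r) ≤ C0 * ENNReal.ofReal (r^2) := by
  rcases le_or_gt r (1/4) with h | h
  · calc μS (Metric.sphere (0:E3) 1 ∩ ball p r) ≤ ENNReal.ofReal (400 * r^2) :=
        cap_small p r hr h
      _ = ENNReal.ofReal 400 * ENNReal.ofReal (r^2) := by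
          rw [← ENNReal.ofReal_mul (by norm_num)]
      _ ≤ C0 * ENNReal.ofReal (r^2) := by
          apply mul_le_mul_left
          rw [C0]; exact le_self_add
  · have h16 : (1:ℝ≥0∞) ≤ ENNReal.ofReal 16 * ENNReal.ofReal (r^2) := by
      rw [← ENNReal.ofReal_mul (by norm_num), ← ENNReal.ofReal_one]
      apply ENNReal.ofReal_le_ofReal
      nlinarith
    calc μS (Metric.sphere (0:E3) 1 ∩ ball p r) ≤ μS (Metric.sphere (0:E3) 1) :=
        measure_mono Set.inter_subset_left
      _ = μS (Metric.sphere (0:E3) 1) * 1 := (mul_one _).symm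
      _ ≤ μS (Metric.sphere (0:E3) 1) * (ENNReal.ofReal 16 * ENNReal.ofReal (r^2)) :=
          mul_le_mul_right h16 _
      _ = (μS (Metric.sphere (0:E3) 1) * ENNReal.ofReal 16) * ENNReal.ofReal (r^2) := by ring
      _ ≤ C0 * ENNReal.ofReal (r^2) := by
          apply mul_le_mul_left
          rw [C0]; exact le_add_self

lemma rpow_neg_anti {a b s : ℝ} (ha : 0 < a) (hab : a ≤ b) (hs : 0 ≤ s) :
    b ^ (-s) ≤ a ^ (-s) := by
  rw [Real.rpow_neg ha.le, Real.rpow_neg (ha.trans_le hab).le]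
  exact inv_anti₀ (Real.rpow_pos_of_pos ha s) (Real.rpow_le_rpow ha.le hab hs)

lemma sq_rpow (x : ℝ) (hx : 0 ≤ x) (t : ℝ) : (x^2) ^ t = x ^ (2*t) := by
  rw [← Real.rpow_natCast x 2, ← Real.rpow_mul hx]
  norm_num

lemma half_rpow_neg (s : ℝ) : ((1/2:ℝ)) ^ (-s) = (2:ℝ) ^ s := by
  rw [one_div, Real.inv_rpow (by norm_num), ← Real.rpow_neg (by norm_num), neg_neg]

lemma div5_rpow (R s : ℝ) (hR : 0 < R) (hs0 : 0 ≤ s) (hs2 : s ≤ 2) :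
    (R/5) ^ (-(s/2)) ≤ 5 * R ^ (-(s/2)) := by
  have h1 : (R/5:ℝ) = R * (5:ℝ)⁻¹ := by ring
  rw [h1, Real.mul_rpow hR.le (by norm_num), Real.inv_rpow (by norm_num),
    ← Real.rpow_neg (by norm_num : (0:ℝ) ≤ 5), neg_neg]
  have h2 : (5:ℝ) ^ (s/2) ≤ 5 := by
    calc (5:ℝ) ^ (s/2) ≤ (5:ℝ) ^ (1:ℝ) :=
          Real.rpow_le_rpow_of_exponent_le (by norm_num) (by linarith)
      _ = 5 := Real.rpow_one 5
  calc R ^ (-(s/2)) * (5:ℝ) ^ (s/2) ≤ R ^ (-(s/2)) * 5 :=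
        mul_le_mul_of_nonneg_left h2 (Real.rpow_nonneg hR.le _)
    _ = 5 * R ^ (-(s/2)) := by ring

lemma aux_geom (s : ℝ) (n : ℕ) :
    ((1/2:ℝ)^(n+1)) ^ (-s) * (((1/2:ℝ)^n)^2) = (2:ℝ)^s * ((2:ℝ)^s/4)^n := by
  induction n with
  | zero =>
      have h : ((2:ℝ)⁻¹) ^ (-s) = 2^s := by
        rw [Real.inv_rpow (by norm_num), ← Real.rpow_neg (by norm_num), neg_neg]
      simp [h]
  | succ n ih =>
      have e1 : ((1/2:ℝ)^(n+1+1)) = ((1/2:ℝ)^(n+1)) * (1/2) := pow_succ _ _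
      have e2 : ((1/2:ℝ)^(n+1)) = ((1/2:ℝ)^n) * (1/2) := pow_succ _ _
      rw [e1, Real.mul_rpow (by positivity) (by norm_num), half_rpow_neg]
      calc ((1/2:ℝ)^(n+1)) ^ (-s) * (2:ℝ)^s * (((1/2:ℝ)^n * (1/2))^2)
          = (((1/2:ℝ)^(n+1)) ^ (-s) * (((1/2:ℝ)^n)^2)) * ((2:ℝ)^s * (1/4)) := by ring
        _ = ((2:ℝ)^s * ((2:ℝ)^s/4)^n) * ((2:ℝ)^s * (1/4)) := by rw [ih]
        _ = (2:ℝ)^s * ((2:ℝ)^s/4)^(n+1) := by rw [pow_succ]; ring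

lemma kernel_meas (v : E3) (ρ s : ℝ) :
    Measurable (fun ω : E3 => ENNReal.ofReal (‖v - ρ • ω‖ ^ (-s))) := by
  apply Measurable.ennreal_ofReal
  exact ((continuous_const.sub (continuous_id.const_smul ρ)).norm.measurable).pow measurable_const

lemma kernel_bound (s : ℝ) (hs0 : 0 < s) (hs2 : s < 2) :
    ∃ C1 : ℝ≥0∞, C1 ≠ ⊤ ∧ ∀ (v : E3) (ρ : ℝ), 0 < ρ →
      (∫⁻ ω in Metric.sphere (0:E3) 1, ENNReal.ofReal (‖v - ρ • ω‖ ^ (-s)) ∂μS)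
        ≤ C1 * ENNReal.ofReal ((‖v‖^2 + ρ^2) ^ (-(s/2))) := by
  haveI : NullSingletonClass μS := MeasureTheory.Measure.noAtoms_hausdorff E3 (by norm_num : (0:ℝ) < 2)
  set M := μS (Metric.sphere (0:E3) 1) with hM
  set q : ℝ≥0∞ := ENNReal.ofReal ((2:ℝ)^s / 4) with hq
  have h4 : (2:ℝ)^(2:ℝ) = 4 := by
    rw [show (2:ℝ) = ((2:ℕ):ℝ) by norm_num, Real.rpow_natCast]; norm_num
  have h2s : (2:ℝ)^s < 4 := by
    rw [← h4]; exact Real.rpow_lt_rpow_of_exponent_lt (by norm_num) hs2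
  have h2s0 : (0:ℝ) < (2:ℝ)^s := Real.rpow_pos_of_pos (by norm_num) s
  have hqlt : q < 1 := by
    rw [hq, ← ENNReal.ofReal_one]
    exact (ENNReal.ofReal_lt_ofReal_iff (by norm_num)).mpr ((div_lt_one (by norm_num)).mpr h2s)
  set C2 : ℝ≥0∞ := M + C0 * ENNReal.ofReal ((2:ℝ)^s) * (1 - q)⁻¹ with hC2
  have hC2top : C2 ≠ ⊤ := by
    rw [hC2]
    apply ENNReal.add_ne_top.mpr
    constructor
    · exact sphere_meas_finite.ne
    · apply ENNReal.mul_ne_top (ENNReal.mul_ne_top C0_lt_top.ne ENNReal.ofReal_ne_top)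
      exact ENNReal.inv_ne_top.mpr (tsub_pos_of_lt hqlt).ne'
  refine ⟨ENNReal.ofReal 5 * M + ENNReal.ofReal 5 * C2, ?_, ?_⟩
  · exact ENNReal.add_ne_top.mpr ⟨ENNReal.mul_ne_top ENNReal.ofReal_ne_top sphere_meas_finite.ne,
      ENNReal.mul_ne_top ENNReal.ofReal_ne_top hC2top⟩
  intro v ρ hρ
  set R := ‖v‖^2 + ρ^2 with hR
  have hRpos : 0 < R := by positivity
  have hnorm_eq : ∀ ω : E3, ω ∈ Metric.sphere (0:E3) 1 → ‖ρ • ω‖ = ρ := by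
    intro ω hω
    have h1 : ‖ω‖ = 1 := by simpa using mem_sphere_zero_iff_norm.mp hω
    rw [norm_smul, h1, Real.norm_eq_abs, _root_.abs_of_pos hρ, mul_one]
  rcases le_or_gt (2*ρ) ‖v‖ with hfar | hnear
  · -- far case
    have hpt : ∀ ω ∈ Metric.sphere (0:E3) 1,
        ENNReal.ofReal (‖v - ρ • ω‖ ^ (-s)) ≤ ENNReal.ofReal (5 * R ^ (-(s/2))) := by
      intro ω hω
      apply ENNReal.ofReal_le_ofReal
      have hlow : ‖v‖ - ρ ≤ ‖v - ρ • ω‖ := by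
        calc ‖v‖ - ρ = ‖v‖ - ‖ρ • ω‖ := by rw [hnorm_eq ω hω]
          _ ≤ ‖v - ρ • ω‖ := norm_sub_norm_le _ _
      have hsq : Real.sqrt (R/5) ≤ ‖v - ρ • ω‖ := by
        rw [← Real.sqrt_sq (norm_nonneg (v - ρ • ω))]
        apply Real.sqrt_le_sqrt
        nlinarith [norm_nonneg (v - ρ • ω)]
      have hpos : (0:ℝ) < Real.sqrt (R/5) := Real.sqrt_pos.mpr (by positivity)
      calc ‖v - ρ • ω‖ ^ (-s) ≤ (Real.sqrt (R/5)) ^ (-s) :=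
            rpow_neg_anti hpos hsq hs0.le
        _ = (R/5) ^ (-(s/2)) := by
            rw [Real.sqrt_eq_rpow, ← Real.rpow_mul (by positivity)]
            congr 1; ring
        _ ≤ 5 * R ^ (-(s/2)) := div5_rpow R s hRpos hs0.le hs2.le
    calc (∫⁻ ω in Metric.sphere (0:E3) 1, ENNReal.ofReal (‖v - ρ • ω‖ ^ (-s)) ∂μS)
        ≤ ∫⁻ _ω in Metric.sphere (0:E3) 1, ENNReal.ofReal (5 * R ^ (-(s/2))) ∂μS :=
          setLIntegral_mono measurable_const hpt
      _ = ENNReal.ofReal (5 * R ^ (-(s/2))) * M := by rw [setLIntegral_const]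
      _ = (ENNReal.ofReal 5 * M) * ENNReal.ofReal (R ^ (-(s/2))) := by
          rw [ENNReal.ofReal_mul (by norm_num)]; ring
      _ ≤ (ENNReal.ofReal 5 * M + ENNReal.ofReal 5 * C2) * ENNReal.ofReal (R ^ (-(s/2))) :=
          mul_le_mul_left le_self_add _
  · -- near case
    set c : E3 := ρ⁻¹ • v with hc
    have hvc : ∀ ω : E3, ω ∈ Metric.sphere (0:E3) 1 → ‖v - ρ • ω‖ = ρ * dist ω c := by
      intro ω hω
      have h1 : v - ρ • ω = ρ • (c - ω) := by
        rw [smul_sub, hc, smul_inv_smul₀ hρ.ne']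
      rw [h1, norm_smul, Real.norm_eq_abs, _root_.abs_of_pos hρ, dist_comm, dist_eq_norm]
    set E : ℕ → Set E3 := fun n => Metric.sphere (0:E3) 1 ∩ ball c ((1/2:ℝ)^n) with hE
    have hdecomp : Metric.sphere (0:E3) 1 ⊆
        ((Metric.sphere (0:E3) 1 \ E 0) ∪ ⋃ n, (E n \ E (n+1))) ∪ ({c} : Set E3) := by
      intro ω hω
      by_cases h0 : ω ∈ E 0
      · by_cases hcc : ω = c
        · exact Set.mem_union_right _ (by simp [hcc])
        · left; right
          have hd : 0 < dist ω c := dist_pos.mpr hcc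
          obtain ⟨m, hm⟩ := exists_pow_lt_of_lt_one hd (by norm_num : (1/2:ℝ) < 1)
          have hex : ∃ k, ω ∉ E k := by
            refine ⟨m, fun hmem => ?_⟩
            exact absurd (mem_ball.mp hmem.2) (not_lt.mpr hm.le)
          classical
          set k := Nat.find hex with hk
          have hknot : ω ∉ E k := Nat.find_spec hex
          have hkpos : k ≠ 0 := by
            intro h; rw [h] at hknot; exact hknot h0
          obtain ⟨j, hj⟩ := Nat.exists_eq_succ_of_ne_zero hkpos
          have hjin : ω ∈ E j := by
            by_contra hnot
            have hle : k ≤ j := Nat.find_le hnot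
            omega
          exact Set.mem_iUnion.mpr ⟨j, hjin, by rw [← Nat.succ_eq_add_one, ← hj]; exact hknot⟩
      · left; left; exact ⟨hω, h0⟩
    have hbound1 : (∫⁻ ω in (Metric.sphere (0:E3) 1 \ E 0), ENNReal.ofReal (‖v - ρ • ω‖ ^ (-s)) ∂μS)
        ≤ ENNReal.ofReal (ρ ^ (-s)) * M := by
      have hpt : ∀ ω ∈ (Metric.sphere (0:E3) 1 \ E 0),
          ENNReal.ofReal (‖v - ρ • ω‖ ^ (-s)) ≤ ENNReal.ofReal (ρ ^ (-s)) := by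
        rintro ω ⟨hωS, hωn⟩
        apply ENNReal.ofReal_le_ofReal
        have h1 : (1:ℝ) ≤ dist ω c := by
          by_contra hlt
          exact hωn ⟨hωS, mem_ball.mpr (by push_neg at hlt; simpa using hlt)⟩
        have h2 : ρ ≤ ‖v - ρ • ω‖ := by
          rw [hvc ω hωS]
          nlinarith
        exact rpow_neg_anti hρ h2 hs0.le
      calc _ ≤ ∫⁻ _ω in (Metric.sphere (0:E3) 1 \ E 0), ENNReal.ofReal (ρ ^ (-s)) ∂μS :=
            setLIntegral_mono measurable_const hpt
        _ = ENNReal.ofReal (ρ ^ (-s)) * μS (Metric.sphere (0:E3) 1 \ E 0) := by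
            rw [setLIntegral_const]
        _ ≤ ENNReal.ofReal (ρ ^ (-s)) * M :=
            mul_le_mul_right (measure_mono Set.diff_subset) _
    have hbound2 : ∀ n : ℕ, (∫⁻ ω in (E n \ E (n+1)), ENNReal.ofReal (‖v - ρ • ω‖ ^ (-s)) ∂μS)
        ≤ (ENNReal.ofReal (ρ ^ (-s)) * C0 * ENNReal.ofReal ((2:ℝ)^s)) * q ^ n := by
      intro n
      have hpt : ∀ ω ∈ (E n \ E (n+1)),
          ENNReal.ofReal (‖v - ρ • ω‖ ^ (-s))
            ≤ ENNReal.ofReal ((ρ * (1/2:ℝ)^(n+1)) ^ (-s)) := by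
        rintro ω ⟨hωn, hωn1⟩
        apply ENNReal.ofReal_le_ofReal
        have hωS : ω ∈ Metric.sphere (0:E3) 1 := hωn.1
        have h1 : (1/2:ℝ)^(n+1) ≤ dist ω c := by
          by_contra hlt
          exact hωn1 ⟨hωS, mem_ball.mpr (by push_neg at hlt; exact hlt)⟩
        have h2 : ρ * (1/2:ℝ)^(n+1) ≤ ‖v - ρ • ω‖ := by
          rw [hvc ω hωS]
          have : (0:ℝ) < (1/2:ℝ)^(n+1) := by positivity
          nlinarith
        exact rpow_neg_anti (by positivity) h2 hs0.le
      calc (∫⁻ ω in (E n \ E (n+1)), ENNReal.ofReal (‖v - ρ • ω‖ ^ (-s)) ∂μS)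
          ≤ ∫⁻ _ω in (E n \ E (n+1)), ENNReal.ofReal ((ρ * (1/2:ℝ)^(n+1)) ^ (-s)) ∂μS :=
            setLIntegral_mono measurable_const hpt
        _ = ENNReal.ofReal ((ρ * (1/2:ℝ)^(n+1)) ^ (-s)) * μS (E n \ E (n+1)) := by
            rw [setLIntegral_const]
        _ ≤ ENNReal.ofReal ((ρ * (1/2:ℝ)^(n+1)) ^ (-s)) * (C0 * ENNReal.ofReal (((1/2:ℝ)^n)^2)) := by
            apply mul_le_mul_right
            calc μS (E n \ E (n+1)) ≤ μS (E n) := measure_mono Set.diff_subset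
              _ ≤ C0 * ENNReal.ofReal (((1/2:ℝ)^n)^2) := cap_all c ((1/2:ℝ)^n) (by positivity)
        _ = (ENNReal.ofReal (ρ ^ (-s)) * C0 * ENNReal.ofReal ((2:ℝ)^s)) * q ^ n := by
            have hHP : ENNReal.ofReal (((1/2:ℝ)^(n+1)) ^ (-s)) * ENNReal.ofReal (((1/2:ℝ)^n)^2)
                = ENNReal.ofReal ((2:ℝ)^s) * ENNReal.ofReal (((2:ℝ)^s/4)^n) := by
              rw [← ENNReal.ofReal_mul (by positivity), ← ENNReal.ofReal_mul (by positivity),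
                aux_geom]
            have hqn : q ^ n = ENNReal.ofReal (((2:ℝ)^s/4)^n) := by
              rw [hq, ← ENNReal.ofReal_pow (by positivity)]
            rw [Real.mul_rpow hρ.le (by positivity), ENNReal.ofReal_mul (Real.rpow_nonneg hρ.le _), hqn]
            calc ENNReal.ofReal (ρ ^ (-s)) * ENNReal.ofReal (((1/2:ℝ)^(n+1)) ^ (-s))
                  * (C0 * ENNReal.ofReal (((1/2:ℝ)^n)^2))
                = (ENNReal.ofReal (ρ ^ (-s)) * C0) * (ENNReal.ofReal (((1/2:ℝ)^(n+1)) ^ (-s))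
                  * ENNReal.ofReal (((1/2:ℝ)^n)^2)) := by ring
              _ = (ENNReal.ofReal (ρ ^ (-s)) * C0) * (ENNReal.ofReal ((2:ℝ)^s)
                  * ENNReal.ofReal (((2:ℝ)^s/4)^n)) := by rw [hHP]
              _ = ENNReal.ofReal (ρ ^ (-s)) * C0 * ENNReal.ofReal ((2:ℝ)^s)
                  * ENNReal.ofReal (((2:ℝ)^s/4)^n) := by ring
    have hsum : (∫⁻ ω in ⋃ n, (E n \ E (n+1)), ENNReal.ofReal (‖v - ρ • ω‖ ^ (-s)) ∂μS)
        ≤ (ENNReal.ofReal (ρ ^ (-s)) * C0 * ENNReal.ofReal ((2:ℝ)^s)) * (1 - q)⁻¹ := by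
      calc (∫⁻ ω in ⋃ n, (E n \ E (n+1)), ENNReal.ofReal (‖v - ρ • ω‖ ^ (-s)) ∂μS)
          ≤ ∑' n, (∫⁻ ω in (E n \ E (n+1)), ENNReal.ofReal (‖v - ρ • ω‖ ^ (-s)) ∂μS) :=
            lintegral_iUnion_le _ _
        _ ≤ ∑' n, (ENNReal.ofReal (ρ ^ (-s)) * C0 * ENNReal.ofReal ((2:ℝ)^s)) * q ^ n :=
            ENNReal.tsum_le_tsum hbound2
        _ = (ENNReal.ofReal (ρ ^ (-s)) * C0 * ENNReal.ofReal ((2:ℝ)^s)) * ∑' n, q ^ n :=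
            ENNReal.tsum_mul_left
        _ = (ENNReal.ofReal (ρ ^ (-s)) * C0 * ENNReal.ofReal ((2:ℝ)^s)) * (1 - q)⁻¹ := by
            rw [ENNReal.tsum_geometric]
    have hsing : (∫⁻ ω in ({c} : Set E3), ENNReal.ofReal (‖v - ρ • ω‖ ^ (-s)) ∂μS) = 0 :=
      setLIntegral_measure_zero _ _ (measure_singleton c)
    have htot : (∫⁻ ω in Metric.sphere (0:E3) 1, ENNReal.ofReal (‖v - ρ • ω‖ ^ (-s)) ∂μS)
        ≤ ENNReal.ofReal (ρ ^ (-s)) * C2 := by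
      calc (∫⁻ ω in Metric.sphere (0:E3) 1, ENNReal.ofReal (‖v - ρ • ω‖ ^ (-s)) ∂μS)
          ≤ ∫⁻ ω in ((Metric.sphere (0:E3) 1 \ E 0) ∪ ⋃ n, (E n \ E (n+1))) ∪ ({c} : Set E3),
              ENNReal.ofReal (‖v - ρ • ω‖ ^ (-s)) ∂μS := lintegral_mono_set hdecomp
        _ ≤ (∫⁻ ω in (Metric.sphere (0:E3) 1 \ E 0) ∪ ⋃ n, (E n \ E (n+1)),
              ENNReal.ofReal (‖v - ρ • ω‖ ^ (-s)) ∂μS)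
            + (∫⁻ ω in ({c} : Set E3), ENNReal.ofReal (‖v - ρ • ω‖ ^ (-s)) ∂μS) :=
            lintegral_union_le _ _ _
        _ ≤ ((∫⁻ ω in (Metric.sphere (0:E3) 1 \ E 0), ENNReal.ofReal (‖v - ρ • ω‖ ^ (-s)) ∂μS)
            + (∫⁻ ω in ⋃ n, (E n \ E (n+1)), ENNReal.ofReal (‖v - ρ • ω‖ ^ (-s)) ∂μS)) + 0 := by
            rw [hsing]
            exact add_le_add_left (lintegral_union_le _ _ _) 0
        _ ≤ (ENNReal.ofReal (ρ ^ (-s)) * M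
            + (ENNReal.ofReal (ρ ^ (-s)) * C0 * ENNReal.ofReal ((2:ℝ)^s)) * (1 - q)⁻¹) + 0 := by
            exact add_le_add_left (add_le_add hbound1 hsum) 0
        _ = ENNReal.ofReal (ρ ^ (-s)) * C2 := by rw [hC2]; ring
    have hρR : ENNReal.ofReal (ρ ^ (-s)) ≤ ENNReal.ofReal 5 * ENNReal.ofReal (R ^ (-(s/2))) := by
      rw [← ENNReal.ofReal_mul (by norm_num)]
      apply ENNReal.ofReal_le_ofReal
      have h1 : ρ ^ (-s) = (ρ^2) ^ (-(s/2)) := by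
        rw [sq_rpow ρ hρ.le]
        congr 1; ring
      have h2 : R/5 ≤ ρ^2 := by
        rw [hR]
        nlinarith [norm_nonneg v, mul_self_nonneg (2*ρ - ‖v‖)]
      calc ρ ^ (-s) = (ρ^2) ^ (-(s/2)) := h1
        _ ≤ (R/5) ^ (-(s/2)) := rpow_neg_anti (by positivity) h2 (by linarith)
        _ ≤ 5 * R ^ (-(s/2)) := div5_rpow R s hRpos hs0.le hs2.le
    calc (∫⁻ ω in Metric.sphere (0:E3) 1, ENNReal.ofReal (‖v - ρ • ω‖ ^ (-s)) ∂μS)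
        ≤ ENNReal.ofReal (ρ ^ (-s)) * C2 := htot
      _ ≤ (ENNReal.ofReal 5 * ENNReal.ofReal (R ^ (-(s/2)))) * C2 := mul_le_mul_left hρR _
      _ = (ENNReal.ofReal 5 * C2) * ENNReal.ofReal (R ^ (-(s/2))) := by ring
      _ ≤ (ENNReal.ofReal 5 * M + ENNReal.ofReal 5 * C2) * ENNReal.ofReal (R ^ (-(s/2))) :=
          mul_le_mul_left le_add_self _


/-- two-sided bound for the spherical average `I²_{β,γ}`. -/
theorem spherical_average_two_sided
    (β γ : ℝ) (hβ : 0 < β) (hγ : 0 ≤ γ) (hβγ : β + γ < 1) :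
    ∃ c C : ℝ, 0 < c ∧ 0 < C ∧
      ∀ (ξ : E3) (ρ : ℝ), 0 < ρ →
        c * (‖ξ‖ ^ 2 + ρ ^ 2) ^ (-(2 * β)) ≤ Isq β γ ξ ρ ∧
        Isq β γ ξ ρ ≤ C * (‖ξ‖ ^ 2 + ρ ^ 2) ^ (-(2 * β)) := by
  haveI : NullSingletonClass μS := MeasureTheory.Measure.noAtoms_hausdorff E3 (by norm_num : (0:ℝ) < 2)
  have hs0 : 0 < 2*β + 2*γ := by linarith
  have hs2 : 2*β + 2*γ < 2 := by linarith
  obtain ⟨C1, hC1top, hC1⟩ := kernel_bound (2*β + 2*γ) hs0 hs2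
  have h2C1top : 2 * C1 ≠ ⊤ := ENNReal.mul_ne_top (by norm_num) hC1top
  refine ⟨(μS (Metric.sphere (0:E3) 1)).toReal, (2*C1).toReal + 1,
    ENNReal.toReal_pos sphere_meas_pos.ne' sphere_meas_finite.ne, by positivity, ?_⟩
  intro ξ ρ hρ
  have hRpos : 0 < ‖ξ‖ ^ 2 + ρ ^ 2 := by positivity
  set s : ℝ := 2*β + 2*γ with hsdef
  set R : ℝ := ‖ξ‖ ^ 2 + ρ ^ 2 with hRdef
  have hfmeas : Measurable (fun ω : E3 => R ^ (2*γ) / (‖ξ - ρ • ω‖ ^ s * ‖ξ + ρ • ω‖ ^ s)) := by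
    apply Measurable.div measurable_const
    apply Measurable.mul
    · exact ((continuous_const.sub (continuous_id.const_smul ρ)).norm.measurable).pow
        measurable_const
    · exact ((continuous_const.add (continuous_id.const_smul ρ)).norm.measurable).pow
        measurable_const
  have hfnn : ∀ ω : E3, 0 ≤ R ^ (2*γ) / (‖ξ - ρ • ω‖ ^ s * ‖ξ + ρ • ω‖ ^ s) := by
    intro ω; positivity
  have hsumsq : ∀ ω ∈ Metric.sphere (0:E3) 1,
      ‖ξ - ρ • ω‖^2 + ‖ξ + ρ • ω‖^2 = 2*R := by
    intro ω hω
    have hωn : ‖ω‖ = 1 := by simpa using mem_sphere_zero_iff_norm.mp hω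
    have h3 : ‖ρ • ω‖^2 = ρ^2 := by
      rw [norm_smul, hωn, Real.norm_eq_abs, mul_one, _root_.sq_abs]
    have h1 := @norm_sub_sq_real E3 _ _ ξ (ρ • ω)
    have h2 := @norm_add_sq_real E3 _ _ ξ (ρ • ω)
    rw [hRdef]
    linarith
  have hneg : ∀ ω : E3, ‖(-ξ) - ρ • ω‖ = ‖ξ + ρ • ω‖ := by
    intro ω
    rw [show (-ξ) - ρ • ω = -(ξ + ρ • ω) by abel, norm_neg]
  -- pointwise upper bound
  have key : ∀ x y : ℝ, 0 < x → 0 < y → x^2 + y^2 = 2*R → x ≤ y →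
      R ^ (2*γ) / (x ^ s * y ^ s) ≤ R ^ (γ - β) * x ^ (-s) := by
    intro x y hx hy hsum hxy
    have hy2 : R ≤ y^2 := by nlinarith [sq_nonneg (x - y), sq_nonneg x]
    have hymin : Real.sqrt R ≤ y := by
      rw [← Real.sqrt_sq hy.le]; exact Real.sqrt_le_sqrt hy2
    have h1 : R ^ (s/2) ≤ y ^ s := by
      calc R ^ (s/2) = (Real.sqrt R) ^ s := by
            rw [Real.sqrt_eq_rpow, ← Real.rpow_mul hRpos.le]; congr 1; ring
        _ ≤ y ^ s := Real.rpow_le_rpow (Real.sqrt_nonneg R) hymin hs0.le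
    have h2 : R ^ (2*γ) / (x ^ s * y ^ s) ≤ R ^ (2*γ) / (x ^ s * R ^ (s/2)) := by
      rw [div_le_div_iff₀ (by positivity) (by positivity)]
      have hmul : x ^ s * R ^ (s/2) ≤ x ^ s * y ^ s :=
        mul_le_mul_of_nonneg_left h1 (Real.rpow_nonneg hx.le s)
      exact mul_le_mul_of_nonneg_left hmul (Real.rpow_nonneg hRpos.le _)
    have h3 : R ^ (2*γ) / (x ^ s * R ^ (s/2)) = R ^ (γ - β) * x ^ (-s) := by
      have hsplit : R ^ (2*γ) = R ^ (γ-β) * R ^ (s/2) := by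
        rw [← Real.rpow_add hRpos]; congr 1; rw [hsdef]; ring
      rw [hsplit, Real.rpow_neg hx.le]
      field_simp
    exact h2.trans_eq h3
  have hup1 : ∀ a b : ℝ, 0 ≤ a → 0 ≤ b → a^2 + b^2 = 2*R →
      R ^ (2*γ) / (a ^ s * b ^ s) ≤ R ^ (γ - β) * (a ^ (-s) + b ^ (-s)) := by
    intro a b ha hb hab
    have hRgb : 0 ≤ R ^ (γ - β) := Real.rpow_nonneg hRpos.le _
    rcases eq_or_lt_of_le ha with h0 | ha'
    · rw [← h0, Real.zero_rpow hs0.ne', zero_mul, _root_.div_zero]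
      positivity
    rcases eq_or_lt_of_le hb with h0 | hb'
    · rw [← h0, Real.zero_rpow hs0.ne', mul_zero, _root_.div_zero]
      positivity
    rcases le_total a b with hab' | hab'
    · calc R ^ (2*γ) / (a ^ s * b ^ s) ≤ R ^ (γ - β) * a ^ (-s) := key a b ha' hb' hab hab'
        _ ≤ R ^ (γ - β) * (a ^ (-s) + b ^ (-s)) := by
            nlinarith [mul_nonneg hRgb (Real.rpow_nonneg hb (-s))]
    · calc R ^ (2*γ) / (a ^ s * b ^ s) = R ^ (2*γ) / (b ^ s * a ^ s) := by rw [mul_comm (a ^ s) (b ^ s)]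
        _ ≤ R ^ (γ - β) * b ^ (-s) := key b a hb' ha' (by linarith) hab'
        _ ≤ R ^ (γ - β) * (a ^ (-s) + b ^ (-s)) := by
            nlinarith [mul_nonneg hRgb (Real.rpow_nonneg ha (-s))]
  have hup : ∀ ω ∈ Metric.sphere (0:E3) 1,
      ENNReal.ofReal (R ^ (2*γ) / (‖ξ - ρ • ω‖ ^ s * ‖ξ + ρ • ω‖ ^ s))
        ≤ ENNReal.ofReal (R ^ (γ - β)) *
            (ENNReal.ofReal (‖ξ - ρ • ω‖ ^ (-s)) + ENNReal.ofReal (‖(-ξ) - ρ • ω‖ ^ (-s))) := by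
    intro ω hω
    rw [hneg ω, ← ENNReal.ofReal_add (Real.rpow_nonneg (norm_nonneg _) _)
      (Real.rpow_nonneg (norm_nonneg _) _),
      ← ENNReal.ofReal_mul (Real.rpow_nonneg hRpos.le _)]
    exact ENNReal.ofReal_le_ofReal
      (hup1 _ _ (norm_nonneg _) (norm_nonneg _) (hsumsq ω hω))
  -- lintegral bound
  have hK1 := hC1 ξ ρ hρ
  have hK2' := hC1 (-ξ) ρ hρ
  have hK2 : (∫⁻ ω in Metric.sphere (0:E3) 1, ENNReal.ofReal (‖(-ξ) - ρ • ω‖ ^ (-s)) ∂μS)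
      ≤ C1 * ENNReal.ofReal (R ^ (-(s/2))) := by
    rwa [norm_neg] at hK2'
  have hlint : (∫⁻ ω in Metric.sphere (0:E3) 1,
      ENNReal.ofReal (R ^ (2*γ) / (‖ξ - ρ • ω‖ ^ s * ‖ξ + ρ • ω‖ ^ s)) ∂μS)
      ≤ (2 * C1) * ENNReal.ofReal (R ^ (-(2*β))) := by
    calc (∫⁻ ω in Metric.sphere (0:E3) 1,
        ENNReal.ofReal (R ^ (2*γ) / (‖ξ - ρ • ω‖ ^ s * ‖ξ + ρ • ω‖ ^ s)) ∂μS)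
        ≤ ∫⁻ ω in Metric.sphere (0:E3) 1,
            ENNReal.ofReal (R ^ (γ - β)) *
              (ENNReal.ofReal (‖ξ - ρ • ω‖ ^ (-s)) + ENNReal.ofReal (‖(-ξ) - ρ • ω‖ ^ (-s))) ∂μS :=
          setLIntegral_mono (measurable_const.mul ((kernel_meas ξ ρ s).add (kernel_meas (-ξ) ρ s))) hup
      _ = ENNReal.ofReal (R ^ (γ - β)) *
            ((∫⁻ ω in Metric.sphere (0:E3) 1, ENNReal.ofReal (‖ξ - ρ • ω‖ ^ (-s)) ∂μS)
            + (∫⁻ ω in Metric.sphere (0:E3) 1, ENNReal.ofReal (‖(-ξ) - ρ • ω‖ ^ (-s)) ∂μS)) := by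
          rw [lintegral_const_mul (f := fun ω => ENNReal.ofReal (‖ξ - ρ • ω‖ ^ (-s)) + ENNReal.ofReal (‖(-ξ) - ρ • ω‖ ^ (-s))) _ ((kernel_meas ξ ρ s).add (kernel_meas (-ξ) ρ s)),
            lintegral_add_left (kernel_meas ξ ρ s)]
      _ ≤ ENNReal.ofReal (R ^ (γ - β)) *
            (C1 * ENNReal.ofReal (R ^ (-(s/2))) + C1 * ENNReal.ofReal (R ^ (-(s/2)))) :=
          mul_le_mul_right (add_le_add hK1 hK2) _
      _ = (2 * C1) * (ENNReal.ofReal (R ^ (γ - β)) * ENNReal.ofReal (R ^ (-(s/2)))) := by ring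
      _ = (2 * C1) * ENNReal.ofReal (R ^ (-(2*β))) := by
          rw [← ENNReal.ofReal_mul (Real.rpow_nonneg hRpos.le _), ← Real.rpow_add hRpos]
          congr 2
          rw [hsdef]; ring
  have hRHStop : (2 * C1) * ENNReal.ofReal (R ^ (-(2*β))) ≠ ⊤ :=
    ENNReal.mul_ne_top h2C1top ENNReal.ofReal_ne_top
  have hfin : (∫⁻ ω in Metric.sphere (0:E3) 1,
      ENNReal.ofReal (R ^ (2*γ) / (‖ξ - ρ • ω‖ ^ s * ‖ξ + ρ • ω‖ ^ s)) ∂μS) ≠ ⊤ :=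
    (lt_of_le_of_lt hlint (lt_top_iff_ne_top.mpr hRHStop)).ne
  -- integral representation
  have hae_meas : AEStronglyMeasurable (fun ω : E3 => R ^ (2*γ) / (‖ξ - ρ • ω‖ ^ s * ‖ξ + ρ • ω‖ ^ s))
      ((μH[2] : Measure E3).restrict (Metric.sphere (0:E3) 1)) := hfmeas.aestronglyMeasurable
  have hnn_ae : 0 ≤ᵐ[(μH[2] : Measure E3).restrict (Metric.sphere (0:E3) 1)]
      (fun ω : E3 => R ^ (2*γ) / (‖ξ - ρ • ω‖ ^ s * ‖ξ + ρ • ω‖ ^ s)) :=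
    Filter.Eventually.of_forall hfnn
  have hrepr : (∫ ω in Metric.sphere (0:E3) 1,
      R ^ (2*γ) / (‖ξ - ρ • ω‖ ^ s * ‖ξ + ρ • ω‖ ^ s) ∂μS)
      = (∫⁻ ω in Metric.sphere (0:E3) 1,
          ENNReal.ofReal (R ^ (2*γ) / (‖ξ - ρ • ω‖ ^ s * ‖ξ + ρ • ω‖ ^ s)) ∂μS).toReal :=
    integral_eq_lintegral_of_nonneg_ae hnn_ae hae_meas
  have hIsq : Isq β γ ξ ρ = ∫ ω in Metric.sphere (0:E3) 1,
      R ^ (2*γ) / (‖ξ - ρ • ω‖ ^ s * ‖ξ + ρ • ω‖ ^ s) ∂μS := rfl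
  constructor
  · -- lower bound
    haveI : IsFiniteMeasure ((μH[2] : Measure E3).restrict (Metric.sphere (0:E3) 1)) := by
      constructor
      rw [Measure.restrict_apply_univ]
      exact sphere_meas_finite
    have hInt : Integrable (fun ω : E3 => R ^ (2*γ) / (‖ξ - ρ • ω‖ ^ s * ‖ξ + ρ • ω‖ ^ s))
        ((μH[2] : Measure E3).restrict (Metric.sphere (0:E3) 1)) := by
      refine ⟨hae_meas, ?_⟩
      rw [hasFiniteIntegral_iff_ofReal hnn_ae]
      exact lt_top_iff_ne_top.mpr hfin
    have hconst : Integrable (fun _ : E3 => R ^ (-(2*β)))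
        ((μH[2] : Measure E3).restrict (Metric.sphere (0:E3) 1)) := integrable_const _
    have hbad : {ω : E3 | ¬ (R ^ (-(2*β)) ≤ R ^ (2*γ) / (‖ξ - ρ • ω‖ ^ s * ‖ξ + ρ • ω‖ ^ s))}
        ∩ Metric.sphere (0:E3) 1 ⊆ ({ρ⁻¹ • ξ, -(ρ⁻¹ • ξ)} : Set E3) := by
      rintro ω ⟨hωbad, hωS⟩
      by_contra hne
      simp only [Set.mem_insert_iff, Set.mem_singleton_iff, not_or] at hne
      apply hωbad
      have ha' : 0 < ‖ξ - ρ • ω‖ := by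
        rw [norm_pos_iff, sub_ne_zero]
        intro h
        exact hne.1 (by rw [h, smul_smul, inv_mul_cancel₀ hρ.ne', one_smul])
      have hb' : 0 < ‖ξ + ρ • ω‖ := by
        rw [norm_pos_iff]
        intro h
        exact hne.2 (by
          have hsm : ρ • ω = -ξ := by rw [eq_neg_iff_add_eq_zero, add_comm]; exact h
          rw [show ω = ρ⁻¹ • (ρ • ω) by rw [smul_smul, inv_mul_cancel₀ hρ.ne', one_smul],
            hsm, smul_neg])
      have hABsum := hsumsq ω hωS
      have hab : ‖ξ - ρ • ω‖ * ‖ξ + ρ • ω‖ ≤ R := by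
        nlinarith [sq_nonneg (‖ξ - ρ • ω‖ - ‖ξ + ρ • ω‖)]
      have habs : ‖ξ - ρ • ω‖ ^ s * ‖ξ + ρ • ω‖ ^ s ≤ R ^ s := by
        rw [← Real.mul_rpow ha'.le hb'.le]
        exact Real.rpow_le_rpow (by positivity) hab hs0.le
      have habs0 : 0 < ‖ξ - ρ • ω‖ ^ s * ‖ξ + ρ • ω‖ ^ s := by
        have := Real.rpow_pos_of_pos ha' s
        have := Real.rpow_pos_of_pos hb' s
        positivity
      calc R ^ (-(2*β)) = R ^ (2*γ) / R ^ s := by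
            rw [← Real.rpow_sub hRpos]
            congr 1
            rw [hsdef]; ring
        _ ≤ R ^ (2*γ) / (‖ξ - ρ • ω‖ ^ s * ‖ξ + ρ • ω‖ ^ s) :=
            div_le_div_of_nonneg_left (Real.rpow_nonneg hRpos.le _) habs0 habs
    have hpairnull : μS ({ρ⁻¹ • ξ, -(ρ⁻¹ • ξ)} : Set E3) = 0 := by
      apply le_antisymm _ zero_le
      calc μS ({ρ⁻¹ • ξ, -(ρ⁻¹ • ξ)} : Set E3)
          ≤ μS ({ρ⁻¹ • ξ} : Set E3) + μS ({-(ρ⁻¹ • ξ)} : Set E3) := by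
            rw [Set.insert_eq]
            exact measure_union_le _ _
        _ = 0 := by rw [measure_singleton, measure_singleton, add_zero]
    have hae2 : ∀ᵐ ω ∂((μH[2] : Measure E3).restrict (Metric.sphere (0:E3) 1)),
        R ^ (-(2*β)) ≤ R ^ (2*γ) / (‖ξ - ρ • ω‖ ^ s * ‖ξ + ρ • ω‖ ^ s) := by
      rw [ae_iff, Measure.restrict_apply' (Metric.isClosed_sphere.measurableSet)]
      exact measure_mono_null hbad hpairnull
    have hmono := integral_mono_ae hconst hInt hae2
    rw [integral_const, measureReal_restrict_apply_univ, smul_eq_mul] at hmono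
    rw [hIsq]
    exact hmono
  · -- upper bound
    rw [hIsq, hrepr]
    calc (∫⁻ ω in Metric.sphere (0:E3) 1,
        ENNReal.ofReal (R ^ (2*γ) / (‖ξ - ρ • ω‖ ^ s * ‖ξ + ρ • ω‖ ^ s)) ∂μS).toReal
        ≤ ((2 * C1) * ENNReal.ofReal (R ^ (-(2*β)))).toReal :=
          ENNReal.toReal_mono hRHStop hlint
      _ = (2*C1).toReal * R ^ (-(2*β)) := by
          rw [ENNReal.toReal_mul, ENNReal.toReal_ofReal (Real.rpow_nonneg hRpos.le _)]
      _ ≤ ((2*C1).toReal + 1) * R ^ (-(2*β)) := by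
          apply mul_le_mul_of_nonneg_right _ (Real.rpow_nonneg hRpos.le _)
          linarith

end
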